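/- If (X,T) is mean equicontinuous, then it is uniformly mean equicontinuous: for every ε > 0 there exists δ > 0 such that whenever d(x,y) ≤ δ, the lower density of {i ∈ ℕ : d(Tⁱx,Tⁱy) ≤ ε} is at least 1 - ε. -/

import Mathlib

open Filter Metric Set
open scoped Classical

noncomputable def lowerDensity (S : Set ℕ) : ℝ :=
  Filter.atTop.liminf (fun n => (((Finset.range (n + 1)).filter (fun i => i ∈ S)).card : ℝ) / (n + 1))

noncomputable def upperDensity (S : Set ℕ) : ℝ :=
  Filter.atTop.limsup (fun n => (((Finset.range (n + 1)).filter (fun i => i ∈ S)).card : ℝ) / (n + 1))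

theorem meanEq_uniform {X : Type*} [MetricSpace X] [CompactSpace X]
    (T : X → X) (hT : Continuous T)
    (hme : ∀ x : X, ∀ ε > 0, ∃ δ > 0, ∀ y : X, dist x y ≤ δ →
      upperDensity {i : ℕ | ε < dist (T^[i] x) (T^[i] y)} < ε) :
    ∀ ε > 0, ∃ δ > 0, ∀ x y : X, dist x y ≤ δ →
      1 - ε ≤ lowerDensity {i : ℕ | dist (T^[i] x) (T^[i] y) ≤ ε} := by
  intro ε hε
  have key : ∀ x : X, ∃ δ > 0, ∀ y : X, dist x y ≤ δ →
      upperDensity {i : ℕ | ε/2 < dist (T^[i] x) (T^[i] y)} < ε/2 :=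
    fun x => hme x (ε/2) (by positivity)
  choose δf hδf hδ using key
  rcases isEmpty_or_nonempty X with hX | hX
  · exact ⟨1, one_pos, fun x => (IsEmpty.false x).elim⟩
  have hcover : (Set.univ : Set X) ⊆ ⋃ x : X, ball x (δf x / 2) := by
    intro y _
    exact mem_iUnion.2 ⟨y, mem_ball_self (by linarith [hδf y])⟩
  obtain ⟨t, ht⟩ := isCompact_univ.elim_finite_subcover (fun x => ball x (δf x / 2))
      (fun x => isOpen_ball) hcover
  obtain ⟨y0⟩ := hX
  obtain ⟨x0, hx0t, _⟩ := mem_iUnion₂.1 (ht (mem_univ y0))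
  have htne : t.Nonempty := ⟨x0, hx0t⟩
  set δ := t.inf' htne (fun x => δf x / 2) with hδdef
  have hδpos : 0 < δ := by
    rw [hδdef, Finset.lt_inf'_iff]
    intro x hx
    linarith [hδf x]
  refine ⟨δ, hδpos, fun y z hyz => ?_⟩
  obtain ⟨x, hxt, hyx⟩ := mem_iUnion₂.1 (ht (mem_univ y))
  have hδle : δ ≤ δf x / 2 := Finset.inf'_le _ hxt
  have hyx' : dist x y < δf x / 2 := by
    have := mem_ball.1 hyx
    rwa [dist_comm] at this
  have h1 : dist x y ≤ δf x := by linarith [hδf x]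
  have h2 : dist x z ≤ δf x := by
    calc dist x z ≤ dist x y + dist y z := dist_triangle _ _ _
      _ ≤ δf x / 2 + δf x / 2 := by linarith
      _ = δf x := by ring
  have hu1 := hδ x y h1
  have hu2 := hδ x z h2
  set u1 : ℕ → ℝ := fun n =>
    (((Finset.range (n + 1)).filter
      (fun i => i ∈ {i : ℕ | ε/2 < dist (T^[i] x) (T^[i] y)})).card : ℝ) / (n + 1) with hu1def
  set u2 : ℕ → ℝ := fun n =>
    (((Finset.range (n + 1)).filter
      (fun i => i ∈ {i : ℕ | ε/2 < dist (T^[i] x) (T^[i] z)})).card : ℝ) / (n + 1) with hu2def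
  set g : ℕ → ℝ := fun n =>
    (((Finset.range (n + 1)).filter
      (fun i => i ∈ {i : ℕ | dist (T^[i] y) (T^[i] z) ≤ ε})).card : ℝ) / (n + 1) with hgdef
  have hub : ∀ (S : Set ℕ) (n : ℕ),
      (((Finset.range (n + 1)).filter (fun i => i ∈ S)).card : ℝ) / (n + 1) ≤ 1 := by
    intro S n
    rw [div_le_one (by positivity)]
    have := Finset.card_filter_le (Finset.range (n+1)) (fun i => i ∈ S)
    rw [Finset.card_range] at this
    exact_mod_cast this
  have hb1 : IsBoundedUnder (· ≤ ·) atTop u1 :=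
    isBoundedUnder_of ⟨1, fun n => hub _ n⟩
  have hb2 : IsBoundedUnder (· ≤ ·) atTop u2 :=
    isBoundedUnder_of ⟨1, fun n => hub _ n⟩
  have hev1 : ∀ᶠ n in atTop, u1 n < ε/2 := eventually_lt_of_limsup_lt hu1 hb1
  have hev2 : ∀ᶠ n in atTop, u2 n < ε/2 := eventually_lt_of_limsup_lt hu2 hb2
  have hgood : ∀ᶠ n in atTop, 1 - ε ≤ g n := by
    filter_upwards [hev1, hev2] with n h1n h2n
    -- card identities
    have hsub : (Finset.range (n + 1)).filter
        (fun i => ¬ (i ∈ {i : ℕ | dist (T^[i] y) (T^[i] z) ≤ ε})) ⊆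
        ((Finset.range (n + 1)).filter
          (fun i => i ∈ {i : ℕ | ε/2 < dist (T^[i] x) (T^[i] y)})) ∪
        ((Finset.range (n + 1)).filter
          (fun i => i ∈ {i : ℕ | ε/2 < dist (T^[i] x) (T^[i] z)})) := by
      intro i hi
      simp only [Finset.mem_filter, Finset.mem_union, Set.mem_setOf_eq, not_le] at hi ⊢
      obtain ⟨hir, hid⟩ := hi
      by_contra hcon
      push_neg at hcon
      obtain ⟨hc1, hc2⟩ := hcon
      have := dist_triangle (T^[i] y) (T^[i] x) (T^[i] z)
      rw [dist_comm (T^[i] y) (T^[i] x)] at this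
      have h1' := hc1 hir
      have h2' := hc2 hir
      linarith
    have hcard : ((Finset.range (n + 1)).filter
        (fun i => ¬ (i ∈ {i : ℕ | dist (T^[i] y) (T^[i] z) ≤ ε}))).card ≤
        ((Finset.range (n + 1)).filter
          (fun i => i ∈ {i : ℕ | ε/2 < dist (T^[i] x) (T^[i] y)})).card +
        ((Finset.range (n + 1)).filter
          (fun i => i ∈ {i : ℕ | ε/2 < dist (T^[i] x) (T^[i] z)})).card :=
      le_trans (Finset.card_le_card hsub) (Finset.card_union_le _ _)
    have hpart : ((Finset.range (n + 1)).filter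
        (fun i => i ∈ {i : ℕ | dist (T^[i] y) (T^[i] z) ≤ ε})).card +
        ((Finset.range (n + 1)).filter
          (fun i => ¬ (i ∈ {i : ℕ | dist (T^[i] y) (T^[i] z) ≤ ε}))).card = n + 1 := by
      rw [Finset.card_filter_add_card_filter_not, Finset.card_range]
    have hnpos : (0:ℝ) < (n:ℝ) + 1 := by positivity
    have hcardR : (((Finset.range (n + 1)).filter
        (fun i => ¬ (i ∈ {i : ℕ | dist (T^[i] y) (T^[i] z) ≤ ε}))).card : ℝ) / (n+1)
        ≤ u1 n + u2 n := by
      rw [hu1def, hu2def]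
      rw [← add_div, div_le_div_iff_of_pos_right hnpos]
      exact_mod_cast hcard
    have hsum : (((Finset.range (n + 1)).filter
        (fun i => i ∈ {i : ℕ | dist (T^[i] y) (T^[i] z) ≤ ε})).card : ℝ) +
        (((Finset.range (n + 1)).filter
        (fun i => ¬ (i ∈ {i : ℕ | dist (T^[i] y) (T^[i] z) ≤ ε}))).card : ℝ) = (n:ℝ) + 1 := by
      exact_mod_cast hpart
    show 1 - ε ≤ (((Finset.range (n + 1)).filter
        (fun i => i ∈ {i : ℕ | dist (T^[i] y) (T^[i] z) ≤ ε})).card : ℝ) / (n+1)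
    have key2 : (((Finset.range (n + 1)).filter
        (fun i => i ∈ {i : ℕ | dist (T^[i] y) (T^[i] z) ≤ ε})).card : ℝ) / (n+1)
        = 1 - (((Finset.range (n + 1)).filter
        (fun i => ¬ (i ∈ {i : ℕ | dist (T^[i] y) (T^[i] z) ≤ ε}))).card : ℝ) / (n+1) := by
      rw [eq_sub_iff_add_eq, ← add_div, hsum, div_self hnpos.ne']
    rw [key2]
    linarith [hcardR]
  have hcb : IsCoboundedUnder (· ≥ ·) atTop g :=
    Filter.isCoboundedUnder_ge_of_le (x := 1) atTop (fun n => hub _ n)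
  exact le_liminf_of_le hcb hgood
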